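/- Let a₁ < 0 < b₁ and let f : [a₁, b₁] → ℝ and g : [ã₁, b̃₁] → ℝ (with 0 in both domains) be twice differentiable convex functions with f(0) = g(0) = f'(0) = g'(0) = 0, and suppose f''(u)/(1+f'(u)²)^{3/2} > g''(v)/(1+g'(v)²)^{3/2} > 0 whenever u, v are in the respective domains. Then f(x) > g(x) for every x ≠ 0 in the intersection of the domains. -/

import Mathlib

open Real Set

private lemma phi_deriv16 (x : ℝ) :
    HasDerivAt (fun y : ℝ => y / (1 + y ^ 2) ^ ((1:ℝ)/2)) ((1 + x ^ 2) ^ (-(3:ℝ)/2)) x := by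
  have hpos : (0:ℝ) < 1 + x ^ 2 := by positivity
  set s : ℝ := (1 + x ^ 2) ^ ((1:ℝ)/2) with hs
  have hspos : 0 < s := Real.rpow_pos_of_pos hpos _
  have hs2 : s ^ 2 = 1 + x ^ 2 := by
    rw [hs, ← Real.rpow_natCast ((1 + x ^ 2) ^ ((1:ℝ)/2)) 2, ← Real.rpow_mul hpos.le]
    norm_num
  have hsinv : (1 + x ^ 2) ^ ((1:ℝ)/2 - 1) = 1 / s := by
    rw [show (1:ℝ)/2 - 1 = -((1:ℝ)/2) by norm_num, Real.rpow_neg hpos.le, ← hs, one_div]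
  have hs3 : (1 + x ^ 2) ^ (-(3:ℝ)/2) = 1 / s ^ 3 := by
    rw [show -(3:ℝ)/2 = -((3:ℝ)/2) by norm_num, Real.rpow_neg hpos.le, one_div]
    congr 1
    rw [hs, ← Real.rpow_natCast ((1 + x ^ 2) ^ ((1:ℝ)/2)) 3, ← Real.rpow_mul hpos.le]
    norm_num
  have h1 : HasDerivAt (fun y : ℝ => 1 + y ^ 2) (2 * x) x := by
    simpa using (hasDerivAt_pow 2 x).const_add 1
  have h2 : HasDerivAt (fun y : ℝ => (1 + y ^ 2) ^ ((1:ℝ)/2))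
      (2 * x * ((1:ℝ)/2) * (1 + x ^ 2) ^ ((1:ℝ)/2 - 1)) x :=
    h1.rpow_const (Or.inl hpos.ne')
  have h3 := (hasDerivAt_id x).div h2 hspos.ne'
  refine h3.congr_deriv ?_
  symm
  rw [hsinv, hs3]
  rw [← hs]
  field_simp
  simp only [id]
  linear_combination (-1 : ℝ) * hs2

private lemma phi_mono16 : StrictMono (fun y : ℝ => y / (1 + y ^ 2) ^ ((1:ℝ)/2)) := by
  apply strictMono_of_deriv_pos
  intro x
  rw [(phi_deriv16 x).deriv]
  positivity

/-- Comparison lemma for graphs: if `f` and `g` are twice differentiable convex functions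
with `f(0)=g(0)=f'(0)=g'(0)=0` and the curvature of the graph of `f` strictly dominates
that of `g` (both positive), then `f > g` away from `0`. -/
theorem stmt16 (a₁ b₁ a₂ b₂ : ℝ) (ha₁ : a₁ < 0) (hb₁ : 0 < b₁) (ha₂ : a₂ ≤ 0) (hb₂ : 0 ≤ b₂)
    (f g f' g' f'' g'' : ℝ → ℝ)
    (hf' : ∀ u ∈ Set.Icc a₁ b₁, HasDerivAt f (f' u) u)
    (hf'' : ∀ u ∈ Set.Icc a₁ b₁, HasDerivAt f' (f'' u) u)
    (hg' : ∀ v ∈ Set.Icc a₂ b₂, HasDerivAt g (g' v) v)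
    (hg'' : ∀ v ∈ Set.Icc a₂ b₂, HasDerivAt g' (g'' v) v)
    (hfconv : ConvexOn ℝ (Set.Icc a₁ b₁) f) (hgconv : ConvexOn ℝ (Set.Icc a₂ b₂) g)
    (hf0 : f 0 = 0) (hg0 : g 0 = 0) (hf'0 : f' 0 = 0) (hg'0 : g' 0 = 0)
    (hcurv : ∀ u ∈ Set.Icc a₁ b₁, ∀ v ∈ Set.Icc a₂ b₂,
      g'' v / (1 + g' v ^ 2) ^ ((3 : ℝ) / 2) < f'' u / (1 + f' u ^ 2) ^ ((3 : ℝ) / 2) ∧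
      0 < g'' v / (1 + g' v ^ 2) ^ ((3 : ℝ) / 2)) :
    ∀ x ∈ Set.Icc a₁ b₁ ∩ Set.Icc a₂ b₂, x ≠ 0 → g x < f x := by
  set φ : ℝ → ℝ := fun y => y / (1 + y ^ 2) ^ ((1:ℝ)/2) with hφ
  have hφ0 : φ 0 = 0 := by simp [hφ]
  have hF : ∀ u ∈ Set.Icc a₁ b₁,
      HasDerivAt (fun t => φ (f' t)) (f'' u / (1 + f' u ^ 2) ^ ((3:ℝ)/2)) u := by
    intro u hu
    have h := (phi_deriv16 (f' u)).comp u (hf'' u hu)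
    refine h.congr_deriv ?_
    symm
    rw [show -(3:ℝ)/2 = -((3:ℝ)/2) by norm_num, Real.rpow_neg (by positivity),
      div_eq_mul_inv, mul_comm]
  have hG : ∀ v ∈ Set.Icc a₂ b₂,
      HasDerivAt (fun t => φ (g' t)) (g'' v / (1 + g' v ^ 2) ^ ((3:ℝ)/2)) v := by
    intro v hv
    have h := (phi_deriv16 (g' v)).comp v (hg'' v hv)
    refine h.congr_deriv ?_
    symm
    rw [show -(3:ℝ)/2 = -((3:ℝ)/2) by norm_num, Real.rpow_neg (by positivity),
      div_eq_mul_inv, mul_comm]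
  intro x hx hne
  obtain ⟨hx1, hx2⟩ := hx
  have h0mem1 : (0:ℝ) ∈ Set.Icc a₁ b₁ := ⟨ha₁.le, hb₁.le⟩
  have h0mem2 : (0:ℝ) ∈ Set.Icc a₂ b₂ := ⟨ha₂, hb₂⟩
  rcases hne.lt_or_gt with hneg | hpos
  · -- x < 0
    have sub1 : Set.Icc x 0 ⊆ Set.Icc a₁ b₁ := Set.Icc_subset_Icc hx1.1 hb₁.le
    have sub2 : Set.Icc x 0 ⊆ Set.Icc a₂ b₂ := Set.Icc_subset_Icc hx2.1 hb₂
    have hder : ∀ t ∈ Set.Icc x 0, HasDerivAt (fun s => φ (f' s) - φ (g' s))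
        (f'' t / (1 + f' t ^ 2) ^ ((3:ℝ)/2) - g'' t / (1 + g' t ^ 2) ^ ((3:ℝ)/2)) t :=
      fun t ht => (hF t (sub1 ht)).sub (hG t (sub2 ht))
    have hmono : StrictMonoOn (fun s => φ (f' s) - φ (g' s)) (Set.Icc x 0) := by
      apply strictMonoOn_of_deriv_pos (convex_Icc _ _)
      · exact fun t ht => (hder t ht).continuousAt.continuousWithinAt
      · intro t ht
        rw [interior_Icc] at ht
        rw [(hder t (Set.Ioo_subset_Icc_self ht)).deriv]
        have := hcurv t (sub1 (Set.Ioo_subset_Icc_self ht)) t (sub2 (Set.Ioo_subset_Icc_self ht))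
        linarith [this.1]
    have hkey : ∀ t ∈ Set.Ico x 0, f' t < g' t := by
      intro t ht
      have h1 := hmono (Set.mem_Icc.2 ⟨ht.1, ht.2.le⟩) (Set.mem_Icc.2 ⟨hneg.le, le_rfl⟩) ht.2
      simp only [hf'0, hg'0, hφ0, sub_zero, sub_self] at h1
      have h2 : φ (f' t) < φ (g' t) := by linarith
      exact phi_mono16.lt_iff_lt.1 h2
    have hder2 : ∀ t ∈ Set.Icc x 0, HasDerivAt (fun s => f s - g s) (f' t - g' t) t :=
      fun t ht => (hf' t (sub1 ht)).sub (hg' t (sub2 ht))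
    have hanti : StrictAntiOn (fun s => f s - g s) (Set.Icc x 0) := by
      apply strictAntiOn_of_deriv_neg (convex_Icc _ _)
      · exact fun t ht => (hder2 t ht).continuousAt.continuousWithinAt
      · intro t ht
        rw [interior_Icc] at ht
        rw [(hder2 t (Set.Ioo_subset_Icc_self ht)).deriv]
        have := hkey t ⟨ht.1.le, ht.2⟩
        linarith
    have := hanti (Set.mem_Icc.2 ⟨le_rfl, hneg.le⟩) (Set.mem_Icc.2 ⟨hneg.le, le_rfl⟩) hneg
    simp only [hf0, hg0, sub_self] at this
    linarith
  · -- 0 < x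
    have sub1 : Set.Icc 0 x ⊆ Set.Icc a₁ b₁ := Set.Icc_subset_Icc ha₁.le hx1.2
    have sub2 : Set.Icc 0 x ⊆ Set.Icc a₂ b₂ := Set.Icc_subset_Icc ha₂ hx2.2
    have hder : ∀ t ∈ Set.Icc 0 x, HasDerivAt (fun s => φ (f' s) - φ (g' s))
        (f'' t / (1 + f' t ^ 2) ^ ((3:ℝ)/2) - g'' t / (1 + g' t ^ 2) ^ ((3:ℝ)/2)) t :=
      fun t ht => (hF t (sub1 ht)).sub (hG t (sub2 ht))
    have hmono : StrictMonoOn (fun s => φ (f' s) - φ (g' s)) (Set.Icc 0 x) := by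
      apply strictMonoOn_of_deriv_pos (convex_Icc _ _)
      · exact fun t ht => (hder t ht).continuousAt.continuousWithinAt
      · intro t ht
        rw [interior_Icc] at ht
        rw [(hder t (Set.Ioo_subset_Icc_self ht)).deriv]
        have := hcurv t (sub1 (Set.Ioo_subset_Icc_self ht)) t (sub2 (Set.Ioo_subset_Icc_self ht))
        linarith [this.1]
    have hkey : ∀ t ∈ Set.Ioc 0 x, g' t < f' t := by
      intro t ht
      have h1 := hmono (Set.mem_Icc.2 ⟨le_rfl, hpos.le⟩) (Set.mem_Icc.2 ⟨ht.1.le, ht.2⟩) ht.1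
      simp only [hf'0, hg'0, hφ0, sub_zero, sub_self] at h1
      have h2 : φ (g' t) < φ (f' t) := by linarith
      exact phi_mono16.lt_iff_lt.1 h2
    have hder2 : ∀ t ∈ Set.Icc 0 x, HasDerivAt (fun s => f s - g s) (f' t - g' t) t :=
      fun t ht => (hf' t (sub1 ht)).sub (hg' t (sub2 ht))
    have hmono2 : StrictMonoOn (fun s => f s - g s) (Set.Icc 0 x) := by
      apply strictMonoOn_of_deriv_pos (convex_Icc _ _)
      · exact fun t ht => (hder2 t ht).continuousAt.continuousWithinAt
      · intro t ht
        rw [interior_Icc] at ht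
        rw [(hder2 t (Set.Ioo_subset_Icc_self ht)).deriv]
        have := hkey t ⟨ht.1, ht.2.le⟩
        linarith
    have := hmono2 (Set.mem_Icc.2 ⟨le_rfl, hpos.le⟩) (Set.mem_Icc.2 ⟨hpos.le, le_rfl⟩) hpos
    simp only [hf0, hg0, sub_self] at this
    linarith
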